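/- For a system with H₀' = Σ_{m=1}^{ℓ} ε_m h_m and H₁ = Σ_{m=1}^{ℓ} δ_m y_m in the so(2ℓ+1) basis, the double commutator satisfies [[iH₀', iH₁], iH₀'] = Σ_{m=1}^{ℓ} δ_m ω_{m-1}² y_m, where ω₀ = ε₁ and ω_m = ε_{m+1} - ε_m for 1 ≤ m < ℓ. -/

import Mathlib

open Matrix

/-- The `N×N` standard matrix unit `e_{a,b}` (1-based indices). -/
noncomputable def e (N a b : ℕ) : Matrix (Fin N) (Fin N) ℂ :=
  Matrix.of fun i j => if (i : ℕ) + 1 = a ∧ (j : ℕ) + 1 = b then 1 else 0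

/-- `x_{a,b} = e_{a,b} - e_{b,a}`. -/
noncomputable def X (N a b : ℕ) : Matrix (Fin N) (Fin N) ℂ := e N a b - e N b a

/-- `y_{a,b} = i (e_{a,b} + e_{b,a})`. -/
noncomputable def Y (N a b : ℕ) : Matrix (Fin N) (Fin N) ℂ :=
  Complex.I • (e N a b + e N b a)

/-- Cartan generator of `so(2ℓ+1)`: `h_m = i (e_{m+1,m+1} - e_{m+ℓ+1,m+ℓ+1})`. -/
noncomputable def hB (l m : ℕ) : Matrix (Fin (2 * l + 1)) (Fin (2 * l + 1)) ℂ :=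
  Complex.I • (e (2 * l + 1) (m + 1) (m + 1) - e (2 * l + 1) (m + l + 1) (m + l + 1))

/-- Generators `x_m` of `so(2ℓ+1)`: `x₁ = x_{ε₁}`, `x_{m+1} = x_{ε_m - ε_{m+1}}`. -/
noncomputable def xB (l m : ℕ) : Matrix (Fin (2 * l + 1)) (Fin (2 * l + 1)) ℂ :=
  if m = 1 then X (2 * l + 1) 1 2 - X (2 * l + 1) (l + 2) 1
  else X (2 * l + 1) (m + 1) m - X (2 * l + 1) (m + l) (m + l + 1)

/-- Generators `y_m` of `so(2ℓ+1)`: `y₁ = y_{ε₁}`, `y_{m+1} = y_{ε_m - ε_{m+1}}`. -/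
noncomputable def yB (l m : ℕ) : Matrix (Fin (2 * l + 1)) (Fin (2 * l + 1)) ℂ :=
  if m = 1 then Y (2 * l + 1) 1 2 - Y (2 * l + 1) (l + 2) 1
  else Y (2 * l + 1) (m + 1) m - Y (2 * l + 1) (m + l) (m + l + 1)

/-- `ω₀ = ε₁`, `ω_m = ε_{m+1} - ε_m` for `m ≥ 1`. -/
noncomputable def w (ε : ℕ → ℝ) (m : ℕ) : ℝ :=
  if m = 0 then ε 1 else ε (m + 1) - ε m

noncomputable def dd (l : ℕ) (ε : ℕ → ℝ) (i : Fin (2 * l + 1)) : ℂ :=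
  if (i : ℕ) = 0 then 0 else if (i : ℕ) ≤ l then (ε i : ℂ) else -(ε ((i : ℕ) - l) : ℂ)

lemma key {N : ℕ} (c : Fin N → ℂ) (A : Matrix (Fin N) (Fin N) ℂ) :
    ⁅⁅Matrix.diagonal c, A⁆, Matrix.diagonal c⁆ =
      Matrix.of fun j k => -(c j - c k) ^ 2 * A j k := by
  ext j k
  simp [Ring.lie_def, Matrix.sub_apply, Matrix.sub_mul, Matrix.mul_sub,
    Matrix.diagonal_mul, Matrix.mul_diagonal]
  ring

lemma keyY {N : ℕ} (c : Fin N → ℂ) (a b : ℕ) (ω : ℂ)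
    (hab : ∀ i j : Fin N, (i : ℕ) + 1 = a → (j : ℕ) + 1 = b → -(c i - c j) ^ 2 = ω) :
    ⁅⁅Matrix.diagonal c, Y N a b⁆, Matrix.diagonal c⁆ = ω • Y N a b := by
  rw [key]
  ext i j
  simp only [Matrix.of_apply, Matrix.smul_apply, Y, e, Matrix.add_apply, smul_eq_mul]
  by_cases h1 : (i : ℕ) + 1 = a ∧ (j : ℕ) + 1 = b
  · have hω := hab i j h1.1 h1.2
    by_cases h2 : (i : ℕ) + 1 = b ∧ (j : ℕ) + 1 = a
    · rw [if_pos h1, if_pos h2]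
      rw [hω]
    · rw [if_pos h1, if_neg h2]
      rw [hω]
  · by_cases h2 : (i : ℕ) + 1 = b ∧ (j : ℕ) + 1 = a
    · have hω := hab j i h2.2 h2.1
      rw [if_neg h1, if_pos h2, ← hω]
      ring
    · rw [if_neg h1, if_neg h2]; ring

lemma sq_helper (x y : ℝ) :
    -(Complex.I * (x : ℂ) - Complex.I * (y : ℂ)) ^ 2 = (((x - y) ^ 2 : ℝ) : ℂ) := by
  push_cast
  linear_combination (-((x : ℂ) - y) ^ 2) * Complex.I_sq

section

attribute [local instance] LieRing.ofAssociativeRing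

lemma perterm (l m : ℕ) (ε : ℕ → ℝ) (hm1 : 1 ≤ m) (hml : m ≤ l) :
    ⁅⁅Matrix.diagonal (fun i => Complex.I * dd l ε i), yB l m⁆,
        Matrix.diagonal (fun i => Complex.I * dd l ε i)⁆ =
      (((w ε (m - 1)) ^ 2 : ℝ) : ℂ) • yB l m := by
  have hl : 1 ≤ l := le_trans hm1 hml
  by_cases hm : m = 1
  · subst hm
    rw [yB, if_pos rfl, lie_sub, sub_lie,
      keyY _ 1 2 _ ?h1, keyY _ (l + 2) 1 _ ?h2, ← smul_sub]
    case h1 =>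
      intro i j hi hj
      have hi0 : (i : ℕ) = 0 := by omega
      have hj0 : (j : ℕ) = 1 := by omega
      have hdi : dd l ε i = ((0 : ℝ) : ℂ) := by simp [dd, hi0]
      have hdj : dd l ε j = ((ε 1 : ℝ) : ℂ) := by
        rw [dd, if_neg (by omega), if_pos (by omega), hj0]
      rw [hdi, hdj, sq_helper]
      norm_cast
      simp [w]
    case h2 =>
      intro i j hi hj
      have hi0 : (i : ℕ) = l + 1 := by omega
      have hj0 : (j : ℕ) = 0 := by omega
      have hdi : dd l ε i = ((-ε 1 : ℝ) : ℂ) := by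
        rw [dd, if_neg (by omega), if_neg (by omega), hi0]
        norm_num
      have hdj : dd l ε j = ((0 : ℝ) : ℂ) := by simp [dd, hj0]
      rw [hdi, hdj, sq_helper]
      norm_cast
      simp [w]
  · rw [yB, if_neg hm, lie_sub, sub_lie,
      keyY _ (m + 1) m _ ?g1, keyY _ (m + l) (m + l + 1) _ ?g2, ← smul_sub]
    case g1 =>
      intro i j hi hj
      have hi0 : (i : ℕ) = m := by omega
      have hj0 : (j : ℕ) = m - 1 := by omega
      have hdi : dd l ε i = ((ε m : ℝ) : ℂ) := by
        rw [dd, if_neg (by omega), if_pos (by omega), hi0]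
      have hdj : dd l ε j = ((ε (m - 1) : ℝ) : ℂ) := by
        rw [dd, if_neg (by omega), if_pos (by omega), hj0]
      rw [hdi, hdj, sq_helper]
      norm_cast
      rw [w, if_neg (by omega)]
      have : m - 1 + 1 = m := by omega
      rw [this]
    case g2 =>
      intro i j hi hj
      have hi0 : (i : ℕ) = m + l - 1 := by omega
      have hj0 : (j : ℕ) = m + l := by omega
      have hdi : dd l ε i = ((-ε (m - 1) : ℝ) : ℂ) := by
        rw [dd, if_neg (by omega), if_neg (by omega), hi0]
        have : m + l - 1 - l = m - 1 := by omega
        rw [this]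
        push_cast
        ring
      have hdj : dd l ε j = ((-ε m : ℝ) : ℂ) := by
        rw [dd, if_neg (by omega), if_neg (by omega), hj0]
        have : m + l - l = m := by omega
        rw [this]
        push_cast
        ring
      rw [hdi, hdj, sq_helper]
      norm_cast
      rw [w, if_neg (by omega)]
      have : m - 1 + 1 = m := by omega
      rw [this]
      ring

end

lemma H0diag (l : ℕ) (ε : ℕ → ℝ) :
    (∑ m ∈ Finset.Icc 1 l, ε m • hB l m) =
      Matrix.diagonal (fun i => Complex.I * dd l ε i) := by
  ext i j
  by_cases hij : i = j
  · subst hij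
    rw [Matrix.sum_apply, Matrix.diagonal_apply_eq]
    rcases Nat.eq_zero_or_pos (i : ℕ) with h0 | h0
    · rw [dd, if_pos h0]
      simp only [mul_zero]
      refine Finset.sum_eq_zero fun m hm => ?_
      simp only [Finset.mem_Icc] at hm
      have c1 : ¬((i:ℕ) = m) := by omega
      have c2 : ¬((i:ℕ) = m + l) := by omega
      simp [hB, e, c1, c2]
    · by_cases hle : (i : ℕ) ≤ l
      · rw [dd, if_neg (by omega), if_pos hle]
        have key2 : ∀ m ∈ Finset.Icc 1 l,
            (ε m • hB l m) i i = if m = (i : ℕ) then (ε m : ℂ) * Complex.I else 0 := by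
          intro m hm
          simp only [Finset.mem_Icc] at hm
          have c2 : ¬((i:ℕ) = m + l) := by omega
          by_cases hmi : m = (i : ℕ)
          · rw [if_pos hmi]
            simp only [hB, e, Matrix.smul_apply, Matrix.sub_apply, Matrix.of_apply,
              smul_eq_mul]
            rw [if_pos (by omega), if_neg (by omega)]
            simp [Complex.real_smul]
          · have c1 : ¬((i:ℕ) = m) := fun h => hmi h.symm
            simp [hB, e, c1, c2, hmi]
        rw [Finset.sum_congr rfl key2, Finset.sum_ite_eq' _ _ _,
          if_pos (by simp only [Finset.mem_Icc]; omega)]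
        ring
      · rw [dd, if_neg (by omega), if_neg hle]
        have key2 : ∀ m ∈ Finset.Icc 1 l,
            (ε m • hB l m) i i = if m = (i : ℕ) - l then -((ε m : ℂ) * Complex.I) else 0 := by
          intro m hm
          simp only [Finset.mem_Icc] at hm
          have c1 : ¬((i:ℕ) = m) := by omega
          by_cases hmi : m = (i : ℕ) - l
          · have c2 : (i:ℕ) = m + l := by omega
            rw [if_pos hmi]
            simp only [hB, e, Matrix.smul_apply, Matrix.sub_apply, Matrix.of_apply,
              smul_eq_mul]
            rw [if_neg (by omega), if_pos (by omega)]
            simp [Complex.real_smul]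
          · have c2 : ¬((i:ℕ) = m + l) := by omega
            rw [if_neg hmi]
            simp only [hB, e, Matrix.smul_apply, Matrix.sub_apply, Matrix.of_apply,
              smul_eq_mul]
            rw [if_neg (by omega), if_neg (by omega)]
            simp
        rw [Finset.sum_congr rfl key2, Finset.sum_ite_eq' _ _ _,
          if_pos (by simp only [Finset.mem_Icc]; omega)]
        ring
  · rw [Matrix.sum_apply, Matrix.diagonal_apply_ne _ hij]
    refine Finset.sum_eq_zero fun m hm => ?_
    have h2 : (i : ℕ) ≠ (j : ℕ) := fun h => hij (Fin.ext h)
    have c1 : ¬((i:ℕ) = m ∧ (j:ℕ) = m) := by omega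
    have c2 : ¬((i:ℕ) = m + l ∧ (j:ℕ) = m + l) := by omega
    simp [hB, e, c1, c2]

lemma lieSumAux {N : ℕ} {α : Type*} (s : Finset α) (x : Matrix (Fin N) (Fin N) ℂ)
    (f : α → Matrix (Fin N) (Fin N) ℂ) :
    ⁅x, ∑ i ∈ s, f i⁆ = ∑ i ∈ s, ⁅x, f i⁆ := by
  simp [Ring.lie_def, Finset.mul_sum, Finset.sum_mul, ← Finset.sum_sub_distrib]

lemma sumLieAux {N : ℕ} {α : Type*} (s : Finset α) (x : Matrix (Fin N) (Fin N) ℂ)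
    (f : α → Matrix (Fin N) (Fin N) ℂ) :
    ⁅∑ i ∈ s, f i, x⁆ = ∑ i ∈ s, ⁅f i, x⁆ := by
  simp [Ring.lie_def, Finset.mul_sum, Finset.sum_mul, ← Finset.sum_sub_distrib]

lemma lieSmulAux {N : ℕ} (r : ℝ) (x y : Matrix (Fin N) (Fin N) ℂ) :
    ⁅x, r • y⁆ = r • ⁅x, y⁆ := by
  simp [Ring.lie_def, smul_sub, Matrix.mul_smul, Matrix.smul_mul]

lemma smulLieAux {N : ℕ} (r : ℝ) (x y : Matrix (Fin N) (Fin N) ℂ) :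
    ⁅r • x, y⁆ = r • ⁅x, y⁆ := by
  simp [Ring.lie_def, smul_sub, Matrix.mul_smul, Matrix.smul_mul]

/-- for `iH₀' = Σ ε_m h_m` and `iH₁ = Σ δ_m y_m` in the
`so(2ℓ+1)` basis, `[[iH₀', iH₁], iH₀'] = Σ_{m=1}^ℓ δ_m ω_{m-1}² y_m`. -/
theorem double_commutator_so (l : ℕ) (ε δ : ℕ → ℝ)
    (H0 H1 : Matrix (Fin (2 * l + 1)) (Fin (2 * l + 1)) ℂ)
    (hH0 : H0 = ∑ m ∈ Finset.Icc 1 l, ε m • hB l m)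
    (hH1 : H1 = ∑ m ∈ Finset.Icc 1 l, δ m • yB l m) :
    ⁅⁅H0, H1⁆, H0⁆ = ∑ m ∈ Finset.Icc 1 l, (δ m * (w ε (m - 1)) ^ 2) • yB l m := by
  subst hH0 hH1
  rw [H0diag, lieSumAux, sumLieAux]
  refine Finset.sum_congr rfl fun m hm => ?_
  simp only [Finset.mem_Icc] at hm
  rw [lieSmulAux, smulLieAux, perterm l m ε hm.1 hm.2, Complex.coe_smul, smul_smul]
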